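/- arXiv:1902.09405 — 6 statements merged into one kernel-verified Lean document; each statement's English description precedes it below -/
import Mathlib

section
/- Fix an integer n ≥ 2, ε ∈ {−1, 1}, and 𝔥 : ℝ → ℝ of class C¹ on a neighborhood of [−1,1]. Let (x, y) : I → (0,∞) × (−1,1) be a solution of the system x' = y, y' = (n−1)(1−y²)/x − nε𝔥(y)√(1−y²) on an open interval I, let s₀ ∈ I, and write x₀ = x(s₀), y₀ = y(s₀). Assume y₀ ≠ 0, ε𝔥(y₀) > 0, and x₀ = Γ_ε(y₀) = (n−1)√(1−y₀²)/(nε𝔥(y₀)). Then y'(s₀) = 0, y is twice differentiable at s₀ with y''(s₀) = −(n−1)(1−y₀²)y₀/x₀² ≠ 0, and s₀ is a strict local maximum of y if y₀ > 0 and a strict local minimum of y if y₀ < 0. -/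
open Set Topology Filter


lemma aux_strict_max {y V : ℝ → ℝ} {I : Set ℝ} (hIopen : IsOpen I) {s₀ : ℝ} (hs₀ : s₀ ∈ I)
    (hy : ∀ s ∈ I, HasDerivAt y (V s) s) (hV0 : V s₀ = 0) {D : ℝ}
    (hD : HasDerivAt V D s₀) (hDneg : D < 0) :
    ∀ᶠ s in 𝓝[≠] s₀, y s < y s₀ := by
  have hslope : Tendsto (slope V s₀) (𝓝[≠] s₀) (𝓝 D) :=
    hasDerivAt_iff_tendsto_slope.mp hD
  have h1 : ∀ᶠ s in 𝓝[≠] s₀, slope V s₀ s < 0 := hslope.eventually_lt_const hDneg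
  have h2 : ∀ᶠ s in 𝓝[≠] s₀, s ∈ I := eventually_nhdsWithin_of_eventually_nhds
    (hIopen.eventually_mem hs₀)
  obtain ⟨δ, hδpos, hball⟩ := Metric.mem_nhdsWithin_iff.mp (h1.and h2)
  have key : ∀ s ∈ Metric.ball s₀ δ, s ≠ s₀ → (s ∈ I ∧ (s < s₀ → 0 < V s) ∧ (s₀ < s → V s < 0)) := by
    intro s hs hne
    have := hball ⟨hs, hne⟩
    refine ⟨this.2, ?_, ?_⟩
    · intro hlt
      have hs' : slope V s₀ s < 0 := this.1
      rw [slope_def_field, hV0] at hs'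
      have hd : s - s₀ < 0 := by linarith
      rcases div_neg_iff.mp (by simpa using hs') with ⟨h, h'⟩ | ⟨h, h'⟩
      · linarith
      · linarith
    · intro hlt
      have hs' : slope V s₀ s < 0 := this.1
      rw [slope_def_field, hV0] at hs'
      have hd : 0 < s - s₀ := by linarith
      rcases div_neg_iff.mp (by simpa using hs') with ⟨h, h'⟩ | ⟨h, h'⟩
      · linarith
      · linarith
  have hball_eq : Metric.ball s₀ δ = Ioo (s₀ - δ) (s₀ + δ) := Real.ball_eq_Ioo s₀ δ
  set a := s₀ - δ/2
  set b := s₀ + δ/2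
  have haI : Icc a s₀ ⊆ Metric.ball s₀ δ := by
    rw [hball_eq]; intro t ht
    constructor <;> [skip; skip] <;>
      simp only [mem_Icc, a] at ht <;> cases ht <;> linarith
  have hbI : Icc s₀ b ⊆ Metric.ball s₀ δ := by
    rw [hball_eq]; intro t ht
    constructor <;> simp only [mem_Icc, b] at ht <;> cases ht <;> linarith
  have hsubI : ∀ t ∈ Metric.ball s₀ δ, t ∈ I := by
    intro t ht
    rcases eq_or_ne t s₀ with rfl | hne
    · exact hs₀
    · exact (key t ht hne).1
  have hmono : StrictMonoOn y (Icc a s₀) := by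
    apply strictMonoOn_of_deriv_pos (convex_Icc a s₀)
    · intro t ht
      exact ((hy t (hsubI t (haI ht))).continuousAt).continuousWithinAt
    · intro t ht
      rw [interior_Icc] at ht
      rw [(hy t (hsubI t (haI ⟨ht.1.le, ht.2.le⟩))).deriv]
      exact (key t (haI ⟨ht.1.le, ht.2.le⟩) (ne_of_lt ht.2)).2.1 ht.2
  have hanti : StrictAntiOn y (Icc s₀ b) := by
    apply strictAntiOn_of_deriv_neg (convex_Icc s₀ b)
    · intro t ht
      exact ((hy t (hsubI t (hbI ht))).continuousAt).continuousWithinAt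
    · intro t ht
      rw [interior_Icc] at ht
      rw [(hy t (hsubI t (hbI ⟨ht.1.le, ht.2.le⟩))).deriv]
      exact (key t (hbI ⟨ht.1.le, ht.2.le⟩) (ne_of_gt ht.1)).2.2 ht.1
  have hIoo : Ioo a b ∈ 𝓝 s₀ := Ioo_mem_nhds (by simp [a]; linarith) (by simp [b]; linarith)
  have hab : a < s₀ ∧ s₀ < b := by constructor <;> simp [a, b] <;> linarith
  filter_upwards [eventually_nhdsWithin_of_eventually_nhds
    (Filter.eventually_of_mem hIoo fun t ht => ht), self_mem_nhdsWithin] with s hs hne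
  rcases lt_or_gt_of_ne (hne : s ≠ s₀) with h | h
  · exact hmono ⟨hs.1.le, h.le⟩ ⟨hab.1.le, le_rfl⟩ h
  · exact hanti ⟨le_rfl, hab.2.le⟩ ⟨h.le, hs.2.le⟩ h

lemma aux_strict_min {y V : ℝ → ℝ} {I : Set ℝ} (hIopen : IsOpen I) {s₀ : ℝ} (hs₀ : s₀ ∈ I)
    (hy : ∀ s ∈ I, HasDerivAt y (V s) s) (hV0 : V s₀ = 0) {D : ℝ}
    (hD : HasDerivAt V D s₀) (hDpos : 0 < D) :
    ∀ᶠ s in 𝓝[≠] s₀, y s₀ < y s := by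
  have h := aux_strict_max (y := fun s => -y s) (V := fun s => -V s) hIopen hs₀
    (fun s hs => (hy s hs).neg) (by simp [hV0]) hD.neg (by linarith)
  filter_upwards [h] with s hs
  simpa using hs

/-- if an orbit of the phase-space system touches the curve
`x = Γ_ε(y)` at a point with `y₀ ≠ 0`, then `y'(s₀) = 0`, `y` is twice differentiable at
`s₀` with `y''(s₀) = -(n-1)(1-y₀²)y₀/x₀² ≠ 0`, and `s₀` is a strict local maximum of `y`
when `y₀ > 0` and a strict local minimum when `y₀ < 0`. -/
theorem orbit_local_extremum_at_Gamma (n : ℕ) (hn : 2 ≤ n) (ε : ℝ) (hε : ε = 1 ∨ ε = -1)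
    (𝔥 : ℝ → ℝ) (U : Set ℝ) (hU : IsOpen U) (hIccU : Set.Icc (-1 : ℝ) 1 ⊆ U)
    (h𝔥 : ContDiffOn ℝ 1 𝔥 U)
    (I : Set ℝ) (hIopen : IsOpen I) (hIconn : I.OrdConnected)
    (x y V : ℝ → ℝ)
    (hmem : ∀ s ∈ I, 0 < x s ∧ y s ∈ Set.Ioo (-1 : ℝ) 1)
    (hV : ∀ s ∈ I, V s = ((n : ℝ) - 1) * (1 - (y s) ^ 2) / x s
      - (n : ℝ) * ε * 𝔥 (y s) * Real.sqrt (1 - (y s) ^ 2))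
    (hx : ∀ s ∈ I, HasDerivAt x (y s) s)
    (hy : ∀ s ∈ I, HasDerivAt y (V s) s)
    (s₀ : ℝ) (hs₀ : s₀ ∈ I) (x₀ y₀ : ℝ) (hx₀ : x₀ = x s₀) (hy₀ : y₀ = y s₀)
    (hy₀ne : y₀ ≠ 0) (hpos : 0 < ε * 𝔥 y₀)
    (hΓ : x₀ = ((n : ℝ) - 1) * Real.sqrt (1 - y₀ ^ 2) / ((n : ℝ) * ε * 𝔥 y₀)) :
    V s₀ = 0 ∧
    HasDerivAt V (-((n : ℝ) - 1) * (1 - y₀ ^ 2) * y₀ / x₀ ^ 2) s₀ ∧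
    -((n : ℝ) - 1) * (1 - y₀ ^ 2) * y₀ / x₀ ^ 2 ≠ 0 ∧
    (0 < y₀ → ∀ᶠ s in nhdsWithin s₀ {s₀}ᶜ, y s < y s₀) ∧
    (y₀ < 0 → ∀ᶠ s in nhdsWithin s₀ {s₀}ᶜ, y s₀ < y s) := by
  obtain ⟨hxpos, hymem⟩ := hmem s₀ hs₀
  have hx₀pos : 0 < x₀ := hx₀ ▸ hxpos
  have h1 : 0 < 1 - y₀ ^ 2 := by
    rw [hy₀]; nlinarith [hymem.1, hymem.2]
  have hnpos : (0:ℝ) < (n:ℝ) := by positivity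
  have hn1 : (0:ℝ) < (n:ℝ) - 1 := by
    have : (2:ℝ) ≤ (n:ℝ) := by exact_mod_cast hn
    linarith
  have hSpos : 0 < Real.sqrt (1 - y₀ ^ 2) := Real.sqrt_pos.mpr h1
  have hS : Real.sqrt (1 - y₀ ^ 2) ^ 2 = 1 - y₀ ^ 2 := Real.sq_sqrt h1.le
  have hA : 0 < (n : ℝ) * ε * 𝔥 y₀ := by
    rw [mul_assoc]; exact mul_pos hnpos hpos
  -- V s₀ = 0
  have hV0 : V s₀ = 0 := by
    rw [hV s₀ hs₀, ← hy₀, ← hx₀, hΓ]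
    set S := Real.sqrt (1 - y₀ ^ 2) with hSdef
    rw [div_div_eq_mul_div, sub_eq_zero, div_eq_iff (by positivity), ← hS]
    ring
  -- derivative of V
  have hy0 : HasDerivAt y 0 s₀ := hV0 ▸ hy s₀ hs₀
  have hsq : HasDerivAt (fun s => 1 - y s ^ 2) 0 s₀ := by
    exact ((hasDerivAt_const s₀ (1:ℝ)).sub (hy0.pow 2)).congr_deriv (by simp)
  have hnum : HasDerivAt (fun s => ((n:ℝ) - 1) * (1 - y s ^ 2)) 0 s₀ := by
    simpa using hsq.const_mul ((n:ℝ) - 1)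
  have hxd : HasDerivAt x y₀ s₀ := hy₀ ▸ hx s₀ hs₀
  have hxne : x s₀ ≠ 0 := ne_of_gt hxpos
  have hf : HasDerivAt (fun s => ((n:ℝ) - 1) * (1 - y s ^ 2) / x s)
      ((0 * x s₀ - ((n:ℝ) - 1) * (1 - y s₀ ^ 2) * y₀) / x s₀ ^ 2) s₀ := hnum.div hxd hxne
  have hy₀U : y s₀ ∈ U := hIccU ⟨hymem.1.le, hymem.2.le⟩
  have hd𝔥 : DifferentiableAt ℝ 𝔥 (y s₀) :=
    ((h𝔥.differentiableOn one_ne_zero) (y s₀) hy₀U).differentiableAt (hU.mem_nhds hy₀U)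
  have hh : HasDerivAt (fun s => 𝔥 (y s)) 0 s₀ := by
    exact (hd𝔥.hasDerivAt.comp s₀ hy0).congr_deriv (by simp)
  have h1ne : 1 - y s₀ ^ 2 ≠ 0 := by rw [← hy₀]; exact ne_of_gt h1
  have hsqrt : HasDerivAt (fun s => Real.sqrt (1 - y s ^ 2)) 0 s₀ := by
    exact ((Real.hasDerivAt_sqrt h1ne).comp s₀ hsq).congr_deriv (by simp)
  have hg : HasDerivAt (fun s => (n:ℝ) * ε * 𝔥 (y s) * Real.sqrt (1 - y s ^ 2)) 0 s₀ := by
    exact ((hh.const_mul ((n:ℝ) * ε)).mul hsqrt).congr_deriv (by simp)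
  have hVev : V =ᶠ[𝓝 s₀] fun s => ((n:ℝ) - 1) * (1 - y s ^ 2) / x s
      - (n:ℝ) * ε * 𝔥 (y s) * Real.sqrt (1 - y s ^ 2) :=
    Filter.eventually_of_mem (hIopen.mem_nhds hs₀) hV
  have hDeq : (0 * x s₀ - ((n:ℝ) - 1) * (1 - y s₀ ^ 2) * y₀) / x s₀ ^ 2 - 0
      = -((n : ℝ) - 1) * (1 - y₀ ^ 2) * y₀ / x₀ ^ 2 := by
    rw [hx₀, hy₀]; ring
  have hDV : HasDerivAt V (-((n : ℝ) - 1) * (1 - y₀ ^ 2) * y₀ / x₀ ^ 2) s₀ := by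
    refine HasDerivAt.congr_of_eventuallyEq ?_ hVev
    exact hDeq ▸ hf.sub hg
  have hDpos' : y₀ < 0 → 0 < -((n : ℝ) - 1) * (1 - y₀ ^ 2) * y₀ / x₀ ^ 2 := by
    intro h
    apply div_pos _ (by positivity)
    nlinarith [mul_pos (mul_pos hn1 h1) (by linarith : (0:ℝ) < -y₀)]
  have hDneg' : 0 < y₀ → -((n : ℝ) - 1) * (1 - y₀ ^ 2) * y₀ / x₀ ^ 2 < 0 := by
    intro h
    apply div_neg_of_neg_of_pos _ (by positivity)
    nlinarith [mul_pos (mul_pos hn1 h1) h]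
  refine ⟨hV0, hDV, ?_, ?_, ?_⟩
  · rcases hy₀ne.lt_or_gt with h | h
    · exact ne_of_gt (hDpos' h)
    · exact ne_of_lt (hDneg' h)
  · intro h
    exact aux_strict_max hIopen hs₀ hy hV0 hDV (hDneg' h)
  · intro h
    exact aux_strict_min hIopen hs₀ hy hV0 hDV (hDpos' h)
end

section
/- Fix an integer n ≥ 2, ε ∈ {−1, 1}, and 𝔥 : ℝ → ℝ of class C¹ on a neighborhood of [−1,1] with 𝔥(−y) = 𝔥(y) for all y ∈ [−1, 1]. Let (x, y) : I → (0,∞) × (−1,1) be a solution of the system x' = y, y' = (n−1)(1−y²)/x − nε𝔥(y)√(1−y²) on an open interval I, and suppose y(s₀) = 0 for some s₀ ∈ I. Then for every t such that both s₀ + t and s₀ − t lie in I, one has x(s₀ + t) = x(s₀ − t) and y(s₀ + t) = −y(s₀ − t). -/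
open Set Filter Topology

/-- The autonomous vector field of the phase-space system. -/
private noncomputable def fld (n : ℕ) (ε : ℝ) (𝔥 : ℝ → ℝ) : ℝ × ℝ → ℝ × ℝ :=
  fun q => (q.2, ((n : ℝ) - 1) * (1 - q.2 ^ 2) / q.1
    - (n : ℝ) * ε * 𝔥 q.2 * Real.sqrt (1 - q.2 ^ 2))

private theorem fld_contDiffAt (n : ℕ) (ε : ℝ) (𝔥 : ℝ → ℝ) (U : Set ℝ) (hU : IsOpen U)
    (hIccU : Set.Icc (-1 : ℝ) 1 ⊆ U) (h𝔥 : ContDiffOn ℝ 1 𝔥 U)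
    (p : ℝ × ℝ) (hp1 : 0 < p.1) (hp2 : p.2 ∈ Set.Ioo (-1 : ℝ) 1) :
    ContDiffAt ℝ 1 (fld n ε 𝔥) p := by
  have hy2 : (1 : ℝ) - p.2 ^ 2 ≠ 0 := by nlinarith [hp2.1, hp2.2]
  have hsnd : ContDiffAt ℝ 1 (fun q : ℝ × ℝ => q.2) p := contDiffAt_snd
  have h1 : ContDiffAt ℝ 1 (fun q : ℝ × ℝ => (1 : ℝ) - q.2 ^ 2) p :=
    (contDiffAt_const (c := (1:ℝ))).sub (hsnd.pow 2)
  have h𝔥' : ContDiffAt ℝ 1 (fun q : ℝ × ℝ => 𝔥 q.2) p := by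
    exact (h𝔥.contDiffAt (hU.mem_nhds (hIccU ⟨hp2.1.le, hp2.2.le⟩))).comp p hsnd
  have hsqrt : ContDiffAt ℝ 1 (fun q : ℝ × ℝ => Real.sqrt (1 - q.2 ^ 2)) p :=
    (Real.contDiffAt_sqrt hy2).comp p h1
  refine hsnd.prodMk ?_
  exact ((contDiffAt_const.mul h1).div contDiffAt_fst hp1.ne').sub
    ((contDiffAt_const.mul h𝔥').mul hsqrt)

/-- if `𝔥` is C¹ near `[-1,1]` and even, then any orbit of the phase-space
system crossing the axis `{y = 0}` at `s₀` is symmetric with respect to that axis: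
`x(s₀ + t) = x(s₀ - t)` and `y(s₀ + t) = -y(s₀ - t)` whenever both parameters belong to
the interval of definition. -/
theorem orbit_symmetric_across_axis (n : ℕ) (hn : 2 ≤ n) (ε : ℝ) (hε : ε = 1 ∨ ε = -1)
    (𝔥 : ℝ → ℝ) (U : Set ℝ) (hU : IsOpen U) (hIccU : Set.Icc (-1 : ℝ) 1 ⊆ U)
    (h𝔥 : ContDiffOn ℝ 1 𝔥 U) (heven : ∀ y ∈ Set.Icc (-1 : ℝ) 1, 𝔥 (-y) = 𝔥 y)
    (I : Set ℝ) (hIopen : IsOpen I) (hIconn : I.OrdConnected)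
    (x y : ℝ → ℝ)
    (hmem : ∀ s ∈ I, 0 < x s ∧ y s ∈ Set.Ioo (-1 : ℝ) 1)
    (hx : ∀ s ∈ I, HasDerivAt x (y s) s)
    (hy : ∀ s ∈ I, HasDerivAt y
      (((n : ℝ) - 1) * (1 - (y s) ^ 2) / x s
        - (n : ℝ) * ε * 𝔥 (y s) * Real.sqrt (1 - (y s) ^ 2)) s)
    (s₀ : ℝ) (hs₀ : s₀ ∈ I) (hy₀ : y s₀ = 0) :
    ∀ t : ℝ, s₀ + t ∈ I → s₀ - t ∈ I →
      x (s₀ + t) = x (s₀ - t) ∧ y (s₀ + t) = -y (s₀ - t) := by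
  set σ : ℝ → ℝ := fun s => 2 * s₀ - s with hσdef
  set K : Set ℝ := I ∩ σ ⁻¹' I with hKdef
  have hσcont : Continuous σ := by fun_prop
  have hKopen : IsOpen K := hIopen.inter (hIopen.preimage hσcont)
  have hσK : ∀ s ∈ K, σ s ∈ K := by
    intro s hs
    refine ⟨hs.2, ?_⟩
    simpa [hσdef] using hs.1
  set F : ℝ → ℝ × ℝ := fun s => (x s, y s) with hFdef
  set G : ℝ → ℝ × ℝ := fun s => (x (σ s), -y (σ s)) with hGdef
  -- derivative facts
  have hσderiv : ∀ s : ℝ, HasDerivAt σ (-1) s := by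
    intro s
    simpa using (hasDerivAt_id s).const_sub (2 * s₀)
  have hF' : ∀ s ∈ K, HasDerivAt F (fld n ε 𝔥 (F s)) s := by
    intro s hs
    exact (hx s hs.1).prodMk (hy s hs.1)
  have hG' : ∀ s ∈ K, HasDerivAt G (fld n ε 𝔥 (G s)) s := by
    intro s hs
    have hσs : σ s ∈ I := hs.2
    have hX : HasDerivAt (fun u => x (σ u)) (-y (σ s)) s := by
      simpa [Function.comp_def] using (hx (σ s) hσs).comp s (hσderiv s)
    have hY : HasDerivAt (fun u => -y (σ u))
        (((n : ℝ) - 1) * (1 - (y (σ s)) ^ 2) / x (σ s)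
          - (n : ℝ) * ε * 𝔥 (y (σ s)) * Real.sqrt (1 - (y (σ s)) ^ 2)) s := by
      have := ((hy (σ s) hσs).comp s (hσderiv s)).neg
      simp [Function.comp_def] at this
      exact this
    have hmemσ := (hmem (σ s) hσs).2
    have heq : fld n ε 𝔥 (G s) = (-y (σ s),
        ((n : ℝ) - 1) * (1 - (y (σ s)) ^ 2) / x (σ s)
          - (n : ℝ) * ε * 𝔥 (y (σ s)) * Real.sqrt (1 - (y (σ s)) ^ 2)) := by
      simp only [fld, hGdef]
      rw [heven (y (σ s)) ⟨hmemσ.1.le, hmemσ.2.le⟩, neg_sq]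
    rw [heq]
    exact hX.prodMk hY
  -- local uniqueness
  have key : ∀ s₁ ∈ K, F s₁ = G s₁ → F =ᶠ[𝓝 s₁] G := by
    intro s₁ hs₁ heq₁
    have hmem₁ := hmem s₁ hs₁.1
    obtain ⟨L, tset, htset, hlip⟩ :=
      (fld_contDiffAt n ε 𝔥 U hU hIccU h𝔥 (F s₁) hmem₁.1 hmem₁.2).exists_lipschitzOnWith
    have hFcont : ContinuousAt F s₁ := (hF' s₁ hs₁).continuousAt
    have hFev : ∀ᶠ t in 𝓝 s₁, HasDerivAt F (fld n ε 𝔥 (F t)) t ∧ F t ∈ tset := by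
      filter_upwards [hKopen.mem_nhds hs₁, hFcont.preimage_mem_nhds htset] with t ht ht'
      exact ⟨hF' t ht, ht'⟩
    have hGcont : ContinuousAt G s₁ := (hG' s₁ hs₁).continuousAt
    have hGev : ∀ᶠ t in 𝓝 s₁, HasDerivAt G (fld n ε 𝔥 (G t)) t ∧ G t ∈ tset := by
      have h' : ContinuousAt G s₁ := hGcont
      have : tset ∈ 𝓝 (G s₁) := heq₁ ▸ htset
      filter_upwards [hKopen.mem_nhds hs₁, h'.preimage_mem_nhds this] with t ht ht'
      exact ⟨hG' t ht, ht'⟩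
    exact ODE_solution_unique_of_eventually
      (v := fun _ : ℝ => fld n ε 𝔥) (s := fun _ : ℝ => tset) (Filter.Eventually.of_forall fun _ => hlip) hFev hGev heq₁
  -- globalize by connectedness
  set u : Set ℝ := {s | F =ᶠ[𝓝 s] G} with hudef
  have huopen : IsOpen u := by
    rw [isOpen_iff_mem_nhds]
    intro s hs
    exact hs.eventually_nhds
  have hKconn : K.OrdConnected := by
    constructor
    intro a ha b hb c hc
    refine ⟨hIconn.out ha.1 hb.1 hc, hIconn.out hb.2 ha.2 ?_⟩
    simp only [hσdef, Set.mem_Icc] at *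
    constructor <;> linarith [hc.1, hc.2]
  have hσs₀ : σ s₀ = s₀ := by simp [hσdef]; ring
  have hs₀K : s₀ ∈ K := ⟨hs₀, by simp only [Set.mem_preimage, hσs₀]; exact hs₀⟩
  have hFG₀ : F s₀ = G s₀ := by
    simp [hFdef, hGdef, hσs₀, hy₀]
  have hKsub : K ⊆ u := by
    refine hKconn.isPreconnected.subset_of_closure_inter_subset huopen
      ⟨s₀, hs₀K, key s₀ hs₀K hFG₀⟩ ?_
    rintro s ⟨hscl, hsK⟩
    have hFc : ContinuousAt F s := (hF' s hsK).continuousAt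
    have hGc : ContinuousAt G s := (hG' s hsK).continuousAt
    have hne : (𝓝[u] s).NeBot := mem_closure_iff_nhdsWithin_neBot.mp hscl
    have heqs : F s = G s := by
      have h1 : Tendsto F (𝓝[u] s) (𝓝 (F s)) := hFc.continuousWithinAt.tendsto
      have h2 : Tendsto G (𝓝[u] s) (𝓝 (G s)) := hGc.continuousWithinAt.tendsto
      have h3 : Tendsto F (𝓝[u] s) (𝓝 (G s)) := by
        refine h2.congr' ?_
        filter_upwards [self_mem_nhdsWithin] with t ht
        exact (ht.self_of_nhds).symm
      exact tendsto_nhds_unique h1 h3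
    exact key s hsK heqs
  intro t htp htm
  have htK : s₀ + t ∈ K := ⟨htp, by simpa [hσdef, show 2 * s₀ - (s₀ + t) = s₀ - t by ring] using htm⟩
  have := (hKsub htK).self_of_nhds
  have hσt : σ (s₀ + t) = s₀ - t := by simp [hσdef]; ring
  rw [hFdef, hGdef] at this
  simp only [hσt] at this
  exact ⟨congrArg Prod.fst this, congrArg Prod.snd this⟩
end

section
/- Fix an integer n ≥ 2, ε ∈ {−1, 1}, and a continuously differentiable function 𝔥 : ℝ → ℝ with 𝔥(1) = 0 and 𝔥(−1) = 0. Define g : ℝ → ℝ by g(y) = 𝔥(y)√(1−y²) for |y| ≤ 1 and g(y) = 0 for |y| > 1. Let (x, y) : I → ℝ² be differentiable on an open interval I with x(s) > 0 for all s ∈ I, satisfying x'(s) = y(s) and y'(s) = (n−1)(1−y(s)²)/x(s) − n ε g(y(s)) for all s ∈ I. If y(s₀) = 1 for some s₀ ∈ I, then y(s) = 1 and x(s) = x(s₀) + s − s₀ for all s ∈ I. -/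
open Set Real

/-- Gronwall-type vanishing lemma: if `f a = 0` and `|f'| ≤ K |f|` on `[a,b]`, then `f ≡ 0`. -/
lemma vanish_of_abs_deriv_le {K : ℝ} {f f' : ℝ → ℝ} {a b : ℝ}
    (hf : ∀ t ∈ Icc a b, HasDerivAt f (f' t) t)
    (h0 : f a = 0)
    (hb : ∀ t ∈ Icc a b, |f' t| ≤ K * |f t|) :
    ∀ t ∈ Icc a b, f t = 0 := by
  intro t ht
  have key := norm_le_gronwallBound_of_norm_deriv_right_le (E := ℝ) (δ := 0) (K := K) (ε := 0)
    (f := f) (f' := f') (a := a) (b := b)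
    (fun s hs => (hf s hs).continuousAt.continuousWithinAt)
    (fun s hs => (hf s (Ico_subset_Icc_self hs)).hasDerivWithinAt)
    (by simp [h0])
    (fun s hs => by
      simpa [Real.norm_eq_abs] using hb s (Ico_subset_Icc_self hs))
  have := key t ht
  rw [gronwallBound_ε0] at this
  simp only [zero_mul, Real.norm_eq_abs] at this
  exact abs_eq_zero.mp (le_antisymm this (abs_nonneg _))

/-- when `𝔥` is C¹ with `𝔥(±1) = 0` and the term `𝔥(y)√(1-y²)` is extended
by `0` for `|y| > 1`, any solution of the (extended) phase-space system attaining `y = 1`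
at some parameter `s₀` satisfies `y ≡ 1` and `x(s) = x(s₀) + s - s₀` on its whole interval
of definition. -/
theorem orbit_attaining_y_one_is_line (n : ℕ) (hn : 2 ≤ n) (ε : ℝ) (hε : ε = 1 ∨ ε = -1)
    (𝔥 : ℝ → ℝ) (h𝔥 : ContDiff ℝ 1 𝔥) (h1 : 𝔥 1 = 0) (hm1 : 𝔥 (-1) = 0)
    (g : ℝ → ℝ)
    (hg : ∀ y : ℝ, g y = if |y| ≤ 1 then 𝔥 y * Real.sqrt (1 - y ^ 2) else 0)
    (I : Set ℝ) (hIopen : IsOpen I) (hIconn : I.OrdConnected)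
    (x y : ℝ → ℝ) (hpos : ∀ s ∈ I, 0 < x s)
    (hx : ∀ s ∈ I, HasDerivAt x (y s) s)
    (hy : ∀ s ∈ I, HasDerivAt y
      (((n : ℝ) - 1) * (1 - (y s) ^ 2) / x s - (n : ℝ) * ε * g (y s)) s)
    (s₀ : ℝ) (hs₀ : s₀ ∈ I) (hys₀ : y s₀ = 1) :
    ∀ s ∈ I, y s = 1 ∧ x s = x s₀ + s - s₀ := by
  -- A Lipschitz-type bound for 𝔥 near 1, hence for g.
  obtain ⟨L, hL⟩ := (isCompact_Icc (a := (-1:ℝ)) (b := 1)).exists_bound_of_continuousOn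
    ((h𝔥.continuous_deriv le_rfl).continuousOn)
  have hL0 : 0 ≤ L := le_trans (norm_nonneg _) (hL 0 (by norm_num))
  have h𝔥lip : ∀ w ∈ Icc (-1:ℝ) 1, |𝔥 w| ≤ L * |w - 1| := by
    intro w hw
    have := Convex.norm_image_sub_le_of_norm_hasDerivWithin_le (f := 𝔥) (f' := deriv 𝔥)
      (s := Icc (-1:ℝ) 1)
      (fun z hz => ((h𝔥.differentiable one_ne_zero).differentiableAt).hasDerivAt.hasDerivWithinAt)
      hL (convex_Icc _ _) (by norm_num : (1:ℝ) ∈ Icc (-1:ℝ) 1) hw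
    simpa [h1, Real.norm_eq_abs] using this
  have hgb : ∀ w : ℝ, |g w| ≤ L * |w - 1| := by
    intro w
    rw [hg]
    by_cases hw : |w| ≤ 1
    · rw [if_pos hw, abs_mul]
      have hsq : |Real.sqrt (1 - w ^ 2)| ≤ 1 := by
        rw [abs_of_nonneg (Real.sqrt_nonneg _)]
        refine sqrt_le_one.mpr ?_
        nlinarith [abs_nonneg w, abs_le.mp hw]
      calc |𝔥 w| * |Real.sqrt (1 - w ^ 2)| ≤ |𝔥 w| * 1 := by
            exact mul_le_mul_of_nonneg_left hsq (abs_nonneg _)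
        _ = |𝔥 w| := mul_one _
        _ ≤ L * |w - 1| := h𝔥lip w (abs_le.mp hw |> fun h => ⟨h.1, h.2⟩)
    · rw [if_neg hw]
      simp only [abs_zero]
      positivity
  have hεabs : |ε| = 1 := by rcases hε with h | h <;> simp [h]
  -- continuity of y on I
  have hycont : ∀ s ∈ I, ContinuousAt y s := fun s hs => (hy s hs).continuousAt
  -- Local propagation: if y s₁ = 1 then y = 1 on a neighborhood.
  have key : ∀ s₁ ∈ I, y s₁ = 1 → ∃ δ > 0, Icc (s₁ - δ) (s₁ + δ) ⊆ I ∧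
      ∀ t ∈ Icc (s₁ - δ) (s₁ + δ), y t = 1 := by
    intro s₁ hs₁ hys₁
    obtain ⟨r, hr, hball⟩ := Metric.isOpen_iff.mp hIopen s₁ hs₁
    have hJI : Icc (s₁ - r/2) (s₁ + r/2) ⊆ I := by
      intro t ht
      apply hball
      rw [Metric.mem_ball, Real.dist_eq]
      rw [mem_Icc] at ht
      rw [abs_lt]; constructor <;> linarith
    -- min of x on the compact interval
    have hxcont : ContinuousOn x (Icc (s₁ - r/2) (s₁ + r/2)) :=
      fun t ht => ((hx t (hJI ht)).continuousAt).continuousWithinAt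
    obtain ⟨c, hcJ, hc⟩ := (isCompact_Icc (a := s₁ - r/2) (b := s₁ + r/2)).exists_isMinOn
      ⟨s₁, by constructor <;> linarith⟩ hxcont
    have hm : 0 < x c := hpos c (hJI hcJ)
    have hcmin : ∀ t ∈ Icc (s₁ - r/2) (s₁ + r/2), x c ≤ x t := fun t ht => hc ht
    -- δ with |y| ≤ 2 near s₁
    obtain ⟨δ', hδ', hδ'y⟩ := Metric.continuousAt_iff.mp (hycont s₁ hs₁) 1 one_pos
    set δ := min (r/2) (δ'/2) with hδdef
    have hδpos : 0 < δ := lt_min (by linarith) (by linarith)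
    have hsubJ : Icc (s₁ - δ) (s₁ + δ) ⊆ Icc (s₁ - r/2) (s₁ + r/2) := by
      apply Icc_subset_Icc <;> simp [hδdef] <;> linarith [min_le_left (r/2) (δ'/2)]
    have hsubI : Icc (s₁ - δ) (s₁ + δ) ⊆ I := fun t ht => hJI (hsubJ ht)
    have hy2 : ∀ t ∈ Icc (s₁ - δ) (s₁ + δ), |y t| ≤ 2 := by
      intro t ht
      rw [mem_Icc] at ht
      have : dist t s₁ < δ' := by
        rw [Real.dist_eq, abs_lt]
        have := min_le_right (r/2) (δ'/2)
        constructor <;> simp only [hδdef] at ht <;> linarith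
      have := hδ'y this
      rw [Real.dist_eq, hys₁] at this
      rw [abs_lt] at this
      rw [abs_le]
      constructor <;> linarith
    set K := ((n:ℝ) - 1) * 3 / x c + n * L with hK
    -- the bound |y'| ≤ K |y - 1| on the interval
    have hbound : ∀ t ∈ Icc (s₁ - δ) (s₁ + δ),
        |((n:ℝ) - 1) * (1 - (y t) ^ 2) / x t - (n : ℝ) * ε * g (y t)| ≤ K * |y t - 1| := by
      intro t ht
      set A := y t with hA
      have hn1 : (0:ℝ) ≤ (n:ℝ) - 1 := by
        have : (2:ℝ) ≤ n := by exact_mod_cast hn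
        linarith
      have hxt : x c ≤ x t := hcmin t (hsubJ ht)
      have hxtpos : 0 < x t := hpos t (hsubI ht)
      have hA2 : |A| ≤ 2 := hy2 t ht
      have h1A : |1 - A ^ 2| ≤ 3 * |A - 1| := by
        have he : (1 - A ^ 2) = -((A - 1) * (A + 1)) := by ring
        rw [he, abs_neg, abs_mul]
        have : |A + 1| ≤ 3 := by
          have := abs_le.mp hA2
          rw [abs_le]; constructor <;> linarith
        calc |A - 1| * |A + 1| ≤ |A - 1| * 3 := mul_le_mul_of_nonneg_left this (abs_nonneg _)
          _ = 3 * |A - 1| := by ring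
      have term1 : |((n:ℝ) - 1) * (1 - A ^ 2) / x t| ≤ ((n:ℝ) - 1) * 3 / x c * |A - 1| := by
        rw [abs_div, abs_mul, abs_of_nonneg hn1, abs_of_pos hxtpos]
        rw [div_mul_eq_mul_div, div_le_div_iff₀ hxtpos hm]
        calc ((n:ℝ) - 1) * |1 - A ^ 2| * x c ≤ ((n:ℝ) - 1) * (3 * |A - 1|) * x t := by
              apply mul_le_mul (mul_le_mul_of_nonneg_left h1A hn1) hxt hm.le
              positivity
          _ = ((n:ℝ) - 1) * 3 * |A - 1| * x t := by ring
      have term2 : |(n : ℝ) * ε * g A| ≤ (n:ℝ) * L * |A - 1| := by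
        rw [abs_mul, abs_mul, hεabs, mul_one, abs_of_nonneg (by positivity : (0:ℝ) ≤ (n:ℝ))]
        calc (n:ℝ) * |g A| ≤ (n:ℝ) * (L * |A - 1|) :=
              mul_le_mul_of_nonneg_left (hgb A) (by positivity)
          _ = (n:ℝ) * L * |A - 1| := by ring
      calc |((n:ℝ) - 1) * (1 - A ^ 2) / x t - (n : ℝ) * ε * g A|
          ≤ |((n:ℝ) - 1) * (1 - A ^ 2) / x t| + |(n : ℝ) * ε * g A| := abs_sub _ _
        _ ≤ ((n:ℝ) - 1) * 3 / x c * |A - 1| + (n:ℝ) * L * |A - 1| := add_le_add term1 term2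
        _ = K * |A - 1| := by rw [hK]; ring
    refine ⟨δ, hδpos, hsubI, ?_⟩
    -- forward
    have fwd : ∀ t ∈ Icc s₁ (s₁ + δ), y t - 1 = 0 := by
      apply vanish_of_abs_deriv_le (K := K)
        (f' := fun t => ((n:ℝ) - 1) * (1 - (y t) ^ 2) / x t - (n : ℝ) * ε * g (y t))
      · intro t ht
        have htI : t ∈ Icc (s₁ - δ) (s₁ + δ) := by
          rw [mem_Icc] at ht ⊢; constructor <;> linarith [ht.1, ht.2]
        exact (hy t (hsubI htI)).sub_const 1
      · simp [hys₁]
      · intro t ht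
        have htI : t ∈ Icc (s₁ - δ) (s₁ + δ) := by
          rw [mem_Icc] at ht ⊢; constructor <;> linarith [ht.1, ht.2]
        simpa using hbound t htI
    -- backward via time reversal
    have bwd : ∀ t ∈ Icc s₁ (s₁ + δ), y (2 * s₁ - t) - 1 = 0 := by
      apply vanish_of_abs_deriv_le (K := K)
        (f' := fun t => -(((n:ℝ) - 1) * (1 - (y (2 * s₁ - t)) ^ 2) / x (2 * s₁ - t)
          - (n : ℝ) * ε * g (y (2 * s₁ - t))))
      · intro t ht
        have htI : 2 * s₁ - t ∈ Icc (s₁ - δ) (s₁ + δ) := by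
          rw [mem_Icc] at ht ⊢; constructor <;> linarith [ht.1, ht.2]
        have hinner : HasDerivAt (fun u : ℝ => 2 * s₁ - u) (-1) t := by
          simpa using (hasDerivAt_id t).const_sub (2 * s₁)
        have := ((hy _ (hsubI htI)).comp t hinner).sub_const 1
        simpa [mul_comm, mul_neg_one] using this
      · rw [show 2 * s₁ - s₁ = s₁ by ring, hys₁]; ring
      · intro t ht
        have htI : 2 * s₁ - t ∈ Icc (s₁ - δ) (s₁ + δ) := by
          rw [mem_Icc] at ht ⊢; constructor <;> linarith [ht.1, ht.2]
        simpa [abs_neg, abs_sub_comm] using hbound _ htI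
    intro t ht
    rw [mem_Icc] at ht
    rcases le_total s₁ t with h | h
    · have := fwd t ⟨h, ht.2⟩
      linarith
    · have := bwd (2 * s₁ - t) ⟨by linarith, by linarith⟩
      simp only [show 2 * s₁ - (2 * s₁ - t) = t by ring] at this
      linarith
  -- Now the clopen argument: y = 1 on all of I.
  have hyone : ∀ s ∈ I, y s = 1 := by
    by_contra hcon
    push_neg at hcon
    obtain ⟨s₂, hs₂I, hs₂⟩ := hcon
    set u : Set ℝ := {s | s ∈ I ∧ y s = 1} with hu_def
    set v : Set ℝ := {s | s ∈ I ∧ y s ≠ 1} with hv_def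
    have hu_open : IsOpen u := by
      rw [isOpen_iff_mem_nhds]
      intro s hs
      obtain ⟨δ, hδ, hsub, hone⟩ := key s hs.1 hs.2
      have : Ioo (s - δ) (s + δ) ⊆ u := fun t ht =>
        ⟨hsub (Ioo_subset_Icc_self ht), hone t (Ioo_subset_Icc_self ht)⟩
      exact Filter.mem_of_superset (Ioo_mem_nhds (by linarith) (by linarith)) this
    have hv_open : IsOpen v := by
      rw [isOpen_iff_mem_nhds]
      intro s hs
      have h1 : {t | y t ≠ 1} ∈ nhds s := (hycont s hs.1).preimage_mem_nhds
        (isOpen_ne.mem_nhds hs.2)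
      have h2 : I ∈ nhds s := hIopen.mem_nhds hs.1
      filter_upwards [h1, h2] with t ht1 ht2
      exact ⟨ht2, ht1⟩
    have hpre : IsPreconnected I := isPreconnected_iff_ordConnected.mpr hIconn
    have hIuv : I ⊆ u ∪ v := by
      intro s hs
      by_cases h : y s = 1
      · exact Or.inl ⟨hs, h⟩
      · exact Or.inr ⟨hs, h⟩
    obtain ⟨t, htI, htu, htv⟩ := hpre u v hu_open hv_open hIuv
      ⟨s₀, hs₀, hs₀, hys₀⟩ ⟨s₂, hs₂I, hs₂I, hs₂⟩
    exact htv.2 htu.2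
  -- The conclusion about x
  intro s hsI
  refine ⟨hyone s hsI, ?_⟩
  have hxconst : ∀ a b : ℝ, a ∈ I → b ∈ I → a ≤ b →
      x b - b = x a - a := by
    intro a b haI hbI hab
    have hIcc : Icc a b ⊆ I := hIconn.out haI hbI
    have := constant_of_has_deriv_right_zero (f := fun t => x t - t) (a := a) (b := b)
      (fun t ht => (((hx t (hIcc ht)).sub (hasDerivAt_id t)).continuousAt).continuousWithinAt)
      (fun t ht => by
        have htI : t ∈ I := hIcc (Ico_subset_Icc_self ht)
        have hd := (hx t htI).sub (hasDerivAt_id t)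
        rw [hyone t htI] at hd
        rw [sub_self] at hd
        exact hd.hasDerivWithinAt)
    exact this b (right_mem_Icc.mpr hab)
  rcases le_total s₀ s with h | h
  · have := hxconst s₀ s hs₀ hsI h; linarith
  · have := hxconst s s₀ hsI hs₀ h; linarith
end

section
/- Fix an integer n ≥ 2 and 𝔥 : ℝ → ℝ with 𝔥(y) ≤ 0 for all y ∈ [−1, 1]. Then every solution (x, y) : I → (0,∞) × (−1,1) of the system x' = y, y' = (n−1)(1−y²)/x − n𝔥(y)√(1−y²) (the case ε = 1) satisfies y'(s) > 0 for all s ∈ I; in particular y is strictly increasing on I. -/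
/-- if `𝔥 ≤ 0` on `[-1,1]`, then along every solution of the phase-space
system with `ε = 1` one has `y' > 0`; in particular `y` is strictly increasing. -/
theorem y_strictly_increasing_of_nonpos_h (n : ℕ) (hn : 2 ≤ n)
    (𝔥 : ℝ → ℝ) (h𝔥 : ∀ y ∈ Set.Icc (-1 : ℝ) 1, 𝔥 y ≤ 0)
    (I : Set ℝ) (hIconn : I.OrdConnected)
    (x y : ℝ → ℝ)
    (hmem : ∀ s ∈ I, 0 < x s ∧ y s ∈ Set.Ioo (-1 : ℝ) 1)
    (hx : ∀ s ∈ I, HasDerivAt x (y s) s)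
    (hy : ∀ s ∈ I, HasDerivAt y
      (((n : ℝ) - 1) * (1 - (y s) ^ 2) / x s
        - (n : ℝ) * 𝔥 (y s) * Real.sqrt (1 - (y s) ^ 2)) s) :
    (∀ s ∈ I, 0 < ((n : ℝ) - 1) * (1 - (y s) ^ 2) / x s
      - (n : ℝ) * 𝔥 (y s) * Real.sqrt (1 - (y s) ^ 2)) ∧
    StrictMonoOn y I := by
  have hpos : ∀ s ∈ I, 0 < ((n : ℝ) - 1) * (1 - (y s) ^ 2) / x s
      - (n : ℝ) * 𝔥 (y s) * Real.sqrt (1 - (y s) ^ 2) := by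
    intro s hs
    obtain ⟨hxs, hy1, hy2⟩ := hmem s hs
    have hy2' : (y s) ^ 2 < 1 := by
      have := abs_lt.mpr ⟨hy1, hy2⟩
      nlinarith [abs_nonneg (y s), sq_abs (y s)]
    have hn1 : (1 : ℝ) ≤ (n : ℝ) - 1 := by
      have : (2 : ℝ) ≤ (n : ℝ) := by exact_mod_cast hn
      linarith
    have h1 : 0 < ((n : ℝ) - 1) * (1 - (y s) ^ 2) / x s :=
      div_pos (mul_pos (by linarith) (by linarith)) hxs
    have h2 : (n : ℝ) * 𝔥 (y s) * Real.sqrt (1 - (y s) ^ 2) ≤ 0 := by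
      have h𝔥s : 𝔥 (y s) ≤ 0 := h𝔥 _ ⟨hy1.le, hy2.le⟩
      have hnn : (0 : ℝ) ≤ (n : ℝ) := by positivity
      exact mul_nonpos_of_nonpos_of_nonneg
        (mul_nonpos_of_nonneg_of_nonpos hnn h𝔥s) (Real.sqrt_nonneg _)
    linarith
  refine ⟨hpos, ?_⟩
  have hconv : Convex ℝ I := hIconn.convex
  refine strictMonoOn_of_deriv_pos hconv ?_ ?_
  · intro s hs
    exact ((hy s hs).continuousAt).continuousWithinAt
  · intro s hs
    have hsI : s ∈ I := interior_subset hs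
    rw [(hy s hsI).deriv]
    exact hpos s hsI
end

section
/- Fix an integer n ≥ 2 and 𝔥 : ℝ → ℝ of class C¹ on a neighborhood of [−1,1]. Let 0 ≤ y₀ < 1 with 𝔥(y₀) = 0 and 𝔥(y) > 0 for all y ∈ (y₀, 1]. For y ∈ (y₀, 1) set Γ(y) = (n−1)√(1−y²)/(n𝔥(y)). Let (x, y) : I → (0,∞) × (−1,1) be a solution on an interval I of the system x' = y, y' = (n−1)(1−y²)/x − n𝔥(y)√(1−y²) (the case ε = 1), and suppose that for some s₀ ∈ I one has y₀ < y(s₀) < 1 and x(s₀) > Γ(y(s₀)). Then for every s ∈ I with s ≥ s₀: y₀ < y(s) < 1, x(s) > Γ(y(s)), y'(s) < 0, and x'(s) > 0. -/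
set_option maxHeartbeats 1000000


/-- positive invariance of the monotonicity region
`Λ⁺ = {(x,y) : y₀ < y < 1, x > Γ(y)}` (where `Γ(y) = (n-1)√(1-y²)/(n𝔥(y))`) for the
phase-space system with `ε = 1`, in the situation `𝔥(y₀) = 0`, `𝔥 > 0` on `(y₀, 1]`:
once an orbit is in `Λ⁺`, it stays in `Λ⁺` for all later times, with `y' < 0` and
`x' > 0` there. -/
theorem bowl_region_invariant (n : ℕ) (hn : 2 ≤ n)
    (𝔥 : ℝ → ℝ) (U : Set ℝ) (hU : IsOpen U) (hIccU : Set.Icc (-1 : ℝ) 1 ⊆ U)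
    (h𝔥 : ContDiffOn ℝ 1 𝔥 U)
    (y₀ : ℝ) (hy₀0 : 0 ≤ y₀) (hy₀1 : y₀ < 1) (hy₀ : 𝔥 y₀ = 0)
    (hpos : ∀ y ∈ Set.Ioc y₀ 1, 0 < 𝔥 y)
    (Γ : ℝ → ℝ)
    (hΓ : ∀ y ∈ Set.Ioo y₀ 1, Γ y = ((n : ℝ) - 1) * Real.sqrt (1 - y ^ 2) / ((n : ℝ) * 𝔥 y))
    (I : Set ℝ) (hIconn : I.OrdConnected)
    (x y : ℝ → ℝ)
    (hmem : ∀ s ∈ I, 0 < x s ∧ y s ∈ Set.Ioo (-1 : ℝ) 1)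
    (hx : ∀ s ∈ I, HasDerivAt x (y s) s)
    (hy : ∀ s ∈ I, HasDerivAt y
      (((n : ℝ) - 1) * (1 - (y s) ^ 2) / x s
        - (n : ℝ) * 𝔥 (y s) * Real.sqrt (1 - (y s) ^ 2)) s)
    (s₀ : ℝ) (hs₀ : s₀ ∈ I) (h₁ : y₀ < y s₀) (h₂ : y s₀ < 1) (h₃ : Γ (y s₀) < x s₀) :
    ∀ s ∈ I, s₀ ≤ s →
      y₀ < y s ∧ y s < 1 ∧ Γ (y s) < x s ∧
      (((n : ℝ) - 1) * (1 - (y s) ^ 2) / x s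
        - (n : ℝ) * 𝔥 (y s) * Real.sqrt (1 - (y s) ^ 2) < 0) ∧
      0 < y s := by
  have hn1 : (1 : ℝ) < (n : ℝ) := by exact_mod_cast Nat.lt_of_lt_of_le one_lt_two hn
  have hnpos : (0 : ℝ) < (n : ℝ) := by linarith
  set G : ℝ → ℝ := fun t => x t * ((n : ℝ) * 𝔥 (y t))
      - ((n : ℝ) - 1) * Real.sqrt (1 - (y t) ^ 2) with hGdef
  set F : ℝ → ℝ := fun t => min (y t - y₀) (G t) with hFdef
  -- continuity of F at points of I
  have hFcont : ∀ t ∈ I, ContinuousAt F t := by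
    intro t ht
    have hxc := (hx t ht).continuousAt
    have hyc := (hy t ht).continuousAt
    have hyU : y t ∈ U := hIccU ⟨le_of_lt (hmem t ht).2.1, le_of_lt (hmem t ht).2.2⟩
    have h𝔥c : ContinuousAt 𝔥 (y t) :=
      h𝔥.continuousOn.continuousAt (hU.mem_nhds hyU)
    have hsqc : ContinuousAt (fun u => Real.sqrt (1 - y u ^ 2)) t :=
      (Real.continuous_sqrt.continuousAt).comp
        (continuousAt_const.sub (hyc.pow 2))
    exact ((hyc.sub continuousAt_const).min
      ((hxc.mul (continuousAt_const.mul (h𝔥c.comp hyc))).sub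
        (continuousAt_const.mul hsqc)))
  -- G s₀ > 0
  have h𝔥₀ : 0 < 𝔥 (y s₀) := hpos _ ⟨h₁, le_of_lt h₂⟩
  have hG₀ : 0 < G s₀ := by
    have := h₃
    rw [hΓ _ ⟨h₁, h₂⟩, div_lt_iff₀ (mul_pos hnpos h𝔥₀)] at this
    simp only [hGdef]
    linarith
  have hF₀ : 0 < F s₀ := lt_min (by linarith) hG₀
  -- key invariance claim
  have key : ∀ s ∈ I, s₀ ≤ s → y₀ < y s ∧ 0 < G s := by
    intro s hs hss
    by_contra hcon
    have hFs : F s ≤ 0 := by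
      rcases not_and_or.mp hcon with h | h
      · exact le_trans (min_le_left _ _) (by linarith [not_lt.mp h])
      · exact le_trans (min_le_right _ _) (not_lt.mp h)
    have hKI : Set.Icc s₀ s ⊆ I := hIconn.out hs₀ hs
    have hFcK : ContinuousOn F (Set.Icc s₀ s) := fun t ht =>
      (hFcont t (hKI ht)).continuousWithinAt
    set B : Set ℝ := Set.Icc s₀ s ∩ F ⁻¹' Set.Iic 0 with hBdef
    have hBclosed : IsClosed B :=
      hFcK.preimage_isClosed_of_isClosed isClosed_Icc isClosed_Iic
    have hsB : s ∈ B := ⟨⟨hss, le_rfl⟩, hFs⟩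
    have hBbdd : BddBelow B := ⟨s₀, fun t ht => ht.1.1⟩
    set s₁ : ℝ := sInf B with hs₁def
    have hs₁B : s₁ ∈ B := hBclosed.csInf_mem ⟨s, hsB⟩ hBbdd
    have hs₁K : s₁ ∈ Set.Icc s₀ s := hs₁B.1
    have hs₁I : s₁ ∈ I := hKI hs₁K
    have hs₀s₁ : s₀ < s₁ := by
      rcases lt_or_eq_of_le hs₁K.1 with h | h
      · exact h
      · exact absurd (h ▸ hs₁B.2) (not_le.mpr hF₀)
    -- F is positive strictly before s₁
    have hFpos : ∀ t, s₀ ≤ t → t < s₁ → 0 < F t := by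
      intro t ht₀ ht₁
      by_contra hF
      have htB : t ∈ B := ⟨⟨ht₀, le_trans (le_of_lt ht₁) hs₁K.2⟩, not_lt.mp hF⟩
      exact absurd (csInf_le hBbdd htB) (not_le.mpr ht₁)
    -- F s₁ = 0
    have hF₁le : F s₁ ≤ 0 := hs₁B.2
    have hF₁ge : 0 ≤ F s₁ := by
      have htend : Filter.Tendsto F (nhdsWithin s₁ (Set.Iio s₁)) (nhds (F s₁)) :=
        ((hFcont s₁ hs₁I).tendsto).mono_left nhdsWithin_le_nhds
      refine ge_of_tendsto htend ?_
      filter_upwards [Ioo_mem_nhdsLT_of_mem (⟨hs₀s₁, le_rfl⟩ : s₁ ∈ Set.Ioc s₀ s₁)]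
        with t ht
      exact le_of_lt (hFpos t (le_of_lt ht.1) ht.2)
    have hF₁ : F s₁ = 0 := le_antisymm hF₁le hF₁ge
    have hy₁ge : y₀ ≤ y s₁ := by
      have := le_min_iff.mp hF₁.ge
      linarith [this.1]
    have hG₁ge : 0 ≤ G s₁ := (le_min_iff.mp hF₁.ge).2
    -- y s₁ ≠ y₀
    have hy₁gt : y₀ < y s₁ := by
      rcases lt_or_eq_of_le hy₁ge with h | h
      · exact h
      · exfalso
        have hsq : 0 < Real.sqrt (1 - (y s₁) ^ 2) := by
          apply Real.sqrt_pos.mpr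
          rw [← h]; nlinarith
        have : G s₁ = -(((n : ℝ) - 1) * Real.sqrt (1 - (y s₁) ^ 2)) := by
          simp only [hGdef, ← h, hy₀]
          ring
        nlinarith [hG₁ge]
    have hG₁ : G s₁ = 0 := by
      have : ¬ (0 < F s₁) := by rw [hF₁]; exact lt_irrefl 0
      rcases lt_or_eq_of_le hG₁ge with h | h
      · exact absurd (lt_min (by linarith) h) this
      · exact h.symm
    -- setup at s₁
    have hmem₁ := hmem s₁ hs₁I
    have hx₁ : 0 < x s₁ := hmem₁.1
    have ha1 : y s₁ < 1 := hmem₁.2.2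
    have ham1 : (-1 : ℝ) < y s₁ := hmem₁.2.1
    have hrpos : 0 < Real.sqrt (1 - (y s₁) ^ 2) := by
      apply Real.sqrt_pos.mpr; nlinarith
    have hrr : Real.sqrt (1 - (y s₁) ^ 2) * Real.sqrt (1 - (y s₁) ^ 2)
        = 1 - (y s₁) ^ 2 := Real.mul_self_sqrt (by nlinarith)
    have hp₁ : 0 < 𝔥 (y s₁) := hpos _ ⟨hy₁gt, le_of_lt ha1⟩
    have hGz : x s₁ * ((n : ℝ) * 𝔥 (y s₁))
        = ((n : ℝ) - 1) * Real.sqrt (1 - (y s₁) ^ 2) := by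
      have := hG₁; simp only [hGdef] at this; linarith
    -- y' = 0 at s₁
    have he : ((n : ℝ) - 1) * (1 - (y s₁) ^ 2) / x s₁
        - (n : ℝ) * 𝔥 (y s₁) * Real.sqrt (1 - (y s₁) ^ 2) = 0 := by
      rw [sub_eq_zero, div_eq_iff (ne_of_gt hx₁)]
      linear_combination (-(Real.sqrt (1 - y s₁ ^ 2))) * hGz - ((n : ℝ) - 1) * hrr
    have hy₁' : HasDerivAt y 0 s₁ := by
      have := hy s₁ hs₁I; rwa [he] at this
    -- derivative of G at s₁
    have hUa : U ∈ nhds (y s₁) :=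
      hU.mem_nhds (hIccU ⟨le_of_lt ham1, le_of_lt ha1⟩)
    have hd𝔥 : HasDerivAt 𝔥 (deriv 𝔥 (y s₁)) (y s₁) :=
      (((h𝔥.differentiableOn one_ne_zero).differentiableAt hUa)).hasDerivAt
    have H1 : HasDerivAt (fun t => (n : ℝ) * 𝔥 (y t))
        ((n : ℝ) * (deriv 𝔥 (y s₁) * 0)) s₁ :=
      (hd𝔥.comp s₁ hy₁').const_mul _
    have H2 := (hx s₁ hs₁I).fun_mul H1
    have hu : HasDerivAt (fun t => 1 - (y t) ^ 2)
        (0 - 2 * (y s₁) ^ 1 * 0) s₁ := by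
      have := ((hy₁').fun_pow 2)
      simpa using (hasDerivAt_const s₁ (1 : ℝ)).fun_sub this
    have hsq : HasDerivAt (fun t => Real.sqrt (1 - (y t) ^ 2))
        (1 / (2 * Real.sqrt (1 - (y s₁) ^ 2)) * (0 - 2 * (y s₁) ^ 1 * 0)) s₁ :=
      (Real.hasDerivAt_sqrt (by nlinarith : (1 : ℝ) - (y s₁) ^ 2 ≠ 0)).comp s₁ hu
    have H3 : HasDerivAt (fun t => ((n : ℝ) - 1) * Real.sqrt (1 - (y t) ^ 2))
        (((n : ℝ) - 1) * (1 / (2 * Real.sqrt (1 - (y s₁) ^ 2)) * (0 - 2 * (y s₁) ^ 1 * 0))) s₁ :=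
      hsq.const_mul _
    have hG' : HasDerivAt G (y s₁ * ((n : ℝ) * 𝔥 (y s₁))) s₁ := by
      have := H2.fun_sub H3
      refine this.congr_deriv ?_
      ring
    have hD : 0 < y s₁ * ((n : ℝ) * 𝔥 (y s₁)) :=
      mul_pos (lt_of_le_of_lt hy₀0 hy₁gt) (mul_pos hnpos hp₁)
    -- slope argument: derivative from the left is ≤ 0
    have hdiff : Set.Iio s₁ \ {s₁} = Set.Iio s₁ :=
      Set.diff_singleton_eq_self (by simp)
    have hslope := hasDerivWithinAt_iff_tendsto_slope.mp
      (hG'.hasDerivWithinAt (s := Set.Iio s₁))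
    rw [hdiff] at hslope
    have hle : y s₁ * ((n : ℝ) * 𝔥 (y s₁)) ≤ 0 := by
      refine le_of_tendsto hslope ?_
      filter_upwards [Ioo_mem_nhdsLT_of_mem (⟨hs₀s₁, le_rfl⟩ : s₁ ∈ Set.Ioc s₀ s₁)]
        with t ht
      have hGt : 0 < G t :=
        lt_of_lt_of_le (hFpos t (le_of_lt ht.1) ht.2) (min_le_right _ _)
      rw [slope_def_field, hG₁, sub_zero]
      exact le_of_lt (div_neg_of_pos_of_neg hGt (by linarith [ht.2]))
    linarith
  -- conclude
  intro s hs hss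
  obtain ⟨hy₀s, hGs⟩ := key s hs hss
  have hmems := hmem s hs
  have hxs : 0 < x s := hmems.1
  have hys1 : y s < 1 := hmems.2.2
  have hysm1 : (-1 : ℝ) < y s := hmems.2.1
  have h𝔥s : 0 < 𝔥 (y s) := hpos _ ⟨hy₀s, le_of_lt hys1⟩
  have hrpos : 0 < Real.sqrt (1 - (y s) ^ 2) := by
    apply Real.sqrt_pos.mpr; nlinarith
  have hrr : Real.sqrt (1 - (y s) ^ 2) * Real.sqrt (1 - (y s) ^ 2)
      = 1 - (y s) ^ 2 := Real.mul_self_sqrt (by nlinarith)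
  have hGs' : ((n : ℝ) - 1) * Real.sqrt (1 - (y s) ^ 2)
      < x s * ((n : ℝ) * 𝔥 (y s)) := by
    simp only [hGdef] at hGs; linarith
  refine ⟨hy₀s, hys1, ?_, ?_, lt_of_le_of_lt hy₀0 hy₀s⟩
  · rw [hΓ _ ⟨hy₀s, hys1⟩, div_lt_iff₀ (mul_pos hnpos h𝔥s)]
    linarith
  · rw [sub_neg, div_lt_iff₀ hxs]
    nlinarith [mul_lt_mul_of_pos_right hGs' hrpos, hrr]
end

section
/- Define f : (−1, 1) → ℝ by f(y) = √(1−y²)/arccos(y). Then f(y) → 1 as y → 1 from the left, and f extends to a continuously differentiable function on (−1, 1]; that is, there exists a function F, continuously differentiable on (−1, 1], with F(y) = f(y) for all y ∈ (−1, 1) and F(1) = 1. -/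
open Real Filter Set Topology

/-- limit sin t / t → 1 as t → 0+ -/
private lemma lim_sin_div : Tendsto (fun t : ℝ => Real.sin t / t) (𝓝[>] 0) (𝓝 1) := by
  have h := (Real.hasDerivAt_sin 0)
  rw [Real.cos_zero] at h
  have h2 := hasDerivAt_iff_tendsto_slope.1 h
  have : Tendsto (slope Real.sin 0) (𝓝[>] 0) (𝓝 1) :=
    h2.mono_left (nhdsWithin_mono _ (fun x hx => ne_of_gt hx))
  refine this.congr' ?_
  filter_upwards [self_mem_nhdsWithin] with t ht
  simp [slope_def_field]

/-- (cos t - 1)/t² → -1/2 as t → 0+ -/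
private lemma lim_cos_sub_one : Tendsto (fun t : ℝ => (Real.cos t - 1) / t ^ 2) (𝓝[>] 0) (𝓝 (-1/2)) := by
  apply HasDerivAt.lhopital_zero_right_on_Ioo (f' := fun t => -Real.sin t)
    (g' := fun t : ℝ => 2 * t) (b := 1) one_pos
  · intro x _; simpa using ((Real.hasDerivAt_cos x).sub_const 1)
  · intro x _
    simpa [mul_comm] using (hasDerivAt_pow 2 x)
  · intro x hx; have := hx.1; positivity
  · exact (((by continuity : Continuous fun t : ℝ => Real.cos t - 1).tendsto' 0 0
      (by simp))).mono_left nhdsWithin_le_nhds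
  · have : Tendsto (fun t : ℝ => t ^ 2) (𝓝 0) (𝓝 0) := by
      simpa using (continuous_pow 2).tendsto (0:ℝ)
    exact this.mono_left nhdsWithin_le_nhds
  · have : Tendsto (fun t : ℝ => -(Real.sin t / t) / 2) (𝓝[>] 0) (𝓝 (-1/2)) :=
      (lim_sin_div).neg.div_const 2
    refine this.congr' ?_
    filter_upwards [self_mem_nhdsWithin] with t ht
    ring

/-- (sin t - t)/t³ → -1/6 as t → 0+ -/
private lemma lim_sin_sub : Tendsto (fun t : ℝ => (Real.sin t - t) / t ^ 3) (𝓝[>] 0) (𝓝 (-1/6)) := by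
  apply HasDerivAt.lhopital_zero_right_on_Ioo (f' := fun t => Real.cos t - 1)
    (g' := fun t : ℝ => 3 * t ^ 2) (b := 1) one_pos
  · intro x _; exact ((Real.hasDerivAt_sin x).sub (hasDerivAt_id' x))
  · intro x _; simpa [mul_comm] using (hasDerivAt_pow 3 x)
  · intro x hx; have := hx.1; positivity
  · exact (((by continuity : Continuous fun t : ℝ => Real.sin t - t).tendsto' 0 0
      (by simp))).mono_left nhdsWithin_le_nhds
  · have : Tendsto (fun t : ℝ => t ^ 3) (𝓝 0) (𝓝 0) := by
      simpa using (continuous_pow 3).tendsto (0:ℝ)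
    exact this.mono_left nhdsWithin_le_nhds
  · have : Tendsto (fun t : ℝ => ((Real.cos t - 1) / t ^ 2) / 3) (𝓝[>] 0) (𝓝 (-1/6)) := by
      have h := lim_cos_sub_one.div_const 3
      have he : ((-1/2 : ℝ)) / 3 = -1/6 := by norm_num
      rwa [he] at h
    refine this.congr' ?_
    filter_upwards [self_mem_nhdsWithin] with t ht
    ring

/-- (sin t - t cos t)/t³ → 1/3 as t → 0+ -/
private lemma lim_sin_sub_mul : Tendsto (fun t : ℝ => (Real.sin t - t * Real.cos t) / t ^ 3) (𝓝[>] 0) (𝓝 (1/3)) := by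
  apply HasDerivAt.lhopital_zero_right_on_Ioo (f' := fun t => t * Real.sin t)
    (g' := fun t : ℝ => 3 * t ^ 2) (b := 1) one_pos
  · intro x _
    have h1 := (hasDerivAt_id' x).mul (Real.hasDerivAt_cos x)
    have := (Real.hasDerivAt_sin x).sub h1
    rw [show x * Real.sin x = Real.cos x - (1 * Real.cos x + x * -Real.sin x) by ring]
    exact this
  · intro x _; simpa [mul_comm] using (hasDerivAt_pow 3 x)
  · intro x hx; have := hx.1; positivity
  · exact (((by continuity : Continuous fun t : ℝ => Real.sin t - t * Real.cos t).tendsto' 0 0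
      (by simp))).mono_left nhdsWithin_le_nhds
  · have : Tendsto (fun t : ℝ => t ^ 3) (𝓝 0) (𝓝 0) := by
      simpa using (continuous_pow 3).tendsto (0:ℝ)
    exact this.mono_left nhdsWithin_le_nhds
  · have : Tendsto (fun t : ℝ => (Real.sin t / t) / 3) (𝓝[>] 0) (𝓝 (1/3)) := by
      have := lim_sin_div.div_const 3
      simpa using this
    refine this.congr' ?_
    filter_upwards [self_mem_nhdsWithin] with t ht
    have ht0 : (0:ℝ) < t := ht
    rw [div_div, div_eq_div_iff (by positivity) (by positivity)]
    ring

/-- arccos tends to 0 from the right -/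
private lemma lim_arccos : Tendsto Real.arccos (𝓝[Set.Ioo (-1:ℝ) 1] 1) (𝓝[>] 0) := by
  rw [tendsto_nhdsWithin_iff]
  constructor
  · have := (Real.continuous_arccos.tendsto 1)
    rw [Real.arccos_one] at this
    exact this.mono_left nhdsWithin_le_nhds
  · filter_upwards [self_mem_nhdsWithin] with y hy
    exact Real.arccos_pos.2 hy.2

/-- the function `f(y) = √(1-y²)/arccos(y)` on `(-1,1)` tends to `1` as
`y → 1⁻` and extends to a continuously differentiable function on `(-1, 1]` with value
`1` at `y = 1`. -/
theorem sqrt_div_arccos_C1_extension (f : ℝ → ℝ)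
    (hf : ∀ y ∈ Set.Ioo (-1 : ℝ) 1, f y = Real.sqrt (1 - y ^ 2) / Real.arccos y) :
    Filter.Tendsto f (nhdsWithin 1 (Set.Ioo (-1 : ℝ) 1)) (nhds 1) ∧
    ∃ F : ℝ → ℝ, ContDiffOn ℝ 1 F (Set.Ioc (-1 : ℝ) 1) ∧
      (∀ y ∈ Set.Ioo (-1 : ℝ) 1, F y = f y) ∧ F 1 = 1 := by
  -- basic facts for y ∈ Ioo (-1) 1
  have key : ∀ y ∈ Set.Ioo (-1:ℝ) 1,
      Real.sqrt (1 - y ^ 2) / Real.arccos y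
        = Real.sin (Real.arccos y) / Real.arccos y := by
    intro y hy
    rw [Real.sin_arccos]
  -- part 1 : tendsto
  have part1 : Tendsto f (𝓝[Set.Ioo (-1:ℝ) 1] 1) (𝓝 1) := by
    have hcomp : Tendsto (fun y => Real.sin (Real.arccos y) / Real.arccos y)
        (𝓝[Set.Ioo (-1:ℝ) 1] 1) (𝓝 1) := lim_sin_div.comp lim_arccos
    refine hcomp.congr' ?_
    filter_upwards [self_mem_nhdsWithin] with y hy
    rw [hf y hy, key y hy]
  refine ⟨part1, ?_⟩
  -- the extension
  set F : ℝ → ℝ := fun y => if y = 1 then 1 else Real.sqrt (1 - y ^ 2) / Real.arccos y with hF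
  have hFIoo : ∀ y ∈ Set.Ioo (-1:ℝ) 1, F y = Real.sqrt (1 - y ^ 2) / Real.arccos y := by
    intro y hy
    simp only [hF, if_neg (ne_of_lt hy.2)]
  -- derivative formula on the interior
  set G' : ℝ → ℝ := fun y =>
    (1 - y * Real.arccos y / Real.sqrt (1 - y ^ 2)) / (Real.arccos y) ^ 2 with hG'
  have hderiv : ∀ y ∈ Set.Ioo (-1:ℝ) 1, HasDerivAt F (G' y) y := by
    intro y hy
    have h1 : (1:ℝ) - y ^ 2 > 0 := by nlinarith [hy.1, hy.2]
    have hs : Real.sqrt (1 - y ^ 2) > 0 := Real.sqrt_pos.2 h1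
    have ha : Real.arccos y > 0 := Real.arccos_pos.2 hy.2
    have hne1 : y ≠ 1 := ne_of_lt hy.2
    have hnem1 : y ≠ -1 := ne_of_gt hy.1
    -- derivative of sqrt(1-y²)
    have hu : HasDerivAt (fun x : ℝ => Real.sqrt (1 - x ^ 2))
        (1 / (2 * Real.sqrt (1 - y ^ 2)) * (-(2 * y))) y := by
      have hin : HasDerivAt (fun x : ℝ => 1 - x ^ 2) (-(2 * y)) y := by
        simpa using ((hasDerivAt_pow 2 y).const_sub 1)
      exact (Real.hasDerivAt_sqrt (ne_of_gt h1)).comp y hin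
    have hv : HasDerivAt Real.arccos (-(1 / Real.sqrt (1 - y ^ 2))) y :=
      Real.hasDerivAt_arccos hnem1 hne1
    have hdiv := hu.div hv (ne_of_gt ha)
    have heq : (1 / (2 * Real.sqrt (1 - y ^ 2)) * (-(2 * y)) * Real.arccos y -
        Real.sqrt (1 - y ^ 2) * -(1 / Real.sqrt (1 - y ^ 2))) / Real.arccos y ^ 2 = G' y := by
      rw [hG']
      field_simp
      ring
    rw [heq] at hdiv
    exact hdiv.congr_of_eventuallyEq (by
      filter_upwards [IsOpen.mem_nhds isOpen_Iio hy.2] with x hx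
      simp only [hF]
      rw [if_neg (ne_of_lt (Set.mem_Iio.mp hx))]; rfl)
  -- limit of the derivative at 1
  have limG' : Tendsto G' (𝓝[Set.Ioo (-1:ℝ) 1] 1) (𝓝 (1/3)) := by
    have hcomp : Tendsto (fun t : ℝ => ((Real.sin t - t * Real.cos t) / t ^ 3) * (t / Real.sin t))
        (𝓝[>] (0:ℝ)) (𝓝 (1/3)) := by
      have h2 : Tendsto (fun t : ℝ => t / Real.sin t) (𝓝[>] (0:ℝ)) (𝓝 1) := by
        have h := lim_sin_div.inv₀ (by norm_num)
        rw [inv_one] at h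
        refine h.congr' ?_
        filter_upwards [self_mem_nhdsWithin] with t ht
        rw [inv_div]
      have := lim_sin_sub_mul.mul h2
      simpa using this
    have hc := hcomp.comp lim_arccos
    refine hc.congr' ?_
    filter_upwards [self_mem_nhdsWithin] with y hy
    have h1 : (1:ℝ) - y ^ 2 > 0 := by nlinarith [hy.1, hy.2]
    have hs : Real.sqrt (1 - y ^ 2) > 0 := Real.sqrt_pos.2 h1
    have ha : Real.arccos y > 0 := Real.arccos_pos.2 hy.2
    have hsin : Real.sin (Real.arccos y) = Real.sqrt (1 - y ^ 2) := Real.sin_arccos y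
    have hcos : Real.cos (Real.arccos y) = y := Real.cos_arccos (le_of_lt hy.1) (le_of_lt hy.2)
    simp only [Function.comp, hG', hsin, hcos]
    rw [eq_comm]
    field_simp
  -- derivative at 1 within Ioc
  have hslope : HasDerivWithinAt F (1/3) (Set.Ioc (-1:ℝ) 1) 1 := by
    rw [hasDerivWithinAt_iff_tendsto_slope]
    have hset : Set.Ioc (-1:ℝ) 1 \ {1} = Set.Ioo (-1:ℝ) 1 := by
      ext x
      simp only [Set.mem_diff, Set.mem_Ioc, Set.mem_Ioo, Set.mem_singleton_iff]
      constructor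
      · rintro ⟨⟨h1, h2⟩, h3⟩; exact ⟨h1, lt_of_le_of_ne h2 h3⟩
      · rintro ⟨h1, h2⟩; exact ⟨⟨h1, le_of_lt h2⟩, ne_of_lt h2⟩
    rw [hset]
    have hcomp : Tendsto (fun t : ℝ =>
        ((Real.sin t - t) / t ^ 3) * (t ^ 2 / (Real.cos t - 1)) * (Real.sin t / t * (t / Real.sin t)))
        (𝓝[>] (0:ℝ)) (𝓝 (1/3)) := by
      have h2 : Tendsto (fun t : ℝ => t ^ 2 / (Real.cos t - 1)) (𝓝[>] (0:ℝ)) (𝓝 (-2)) := by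
        have h := lim_cos_sub_one.inv₀ (by norm_num)
        have he : ((-1/2 : ℝ))⁻¹ = -2 := by norm_num
        rw [he] at h
        refine h.congr' ?_
        filter_upwards [self_mem_nhdsWithin] with t ht
        rw [inv_div]
      have h3 : Tendsto (fun t : ℝ => t / Real.sin t) (𝓝[>] (0:ℝ)) (𝓝 1) := by
        have h := lim_sin_div.inv₀ (by norm_num)
        rw [inv_one] at h
        refine h.congr' ?_
        filter_upwards [self_mem_nhdsWithin] with t ht
        rw [inv_div]
      have h4 := (lim_sin_sub.mul h2).mul (lim_sin_div.mul h3)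
      norm_num at h4
      exact h4
    have hc := hcomp.comp lim_arccos
    refine hc.congr' ?_
    filter_upwards [self_mem_nhdsWithin] with y hy
    have h1 : (1:ℝ) - y ^ 2 > 0 := by nlinarith [hy.1, hy.2]
    have hs : Real.sqrt (1 - y ^ 2) > 0 := Real.sqrt_pos.2 h1
    have ha : Real.arccos y > 0 := Real.arccos_pos.2 hy.2
    have hsin : Real.sin (Real.arccos y) = Real.sqrt (1 - y ^ 2) := Real.sin_arccos y
    have hcos : Real.cos (Real.arccos y) = y := Real.cos_arccos (le_of_lt hy.1) (le_of_lt hy.2)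
    have hyne : y - 1 ≠ 0 := sub_ne_zero.2 (ne_of_lt hy.2)
    have ha' : Real.arccos y ≠ 0 := ne_of_gt ha
    have hs' : Real.sqrt (1 - y ^ 2) ≠ 0 := ne_of_gt hs
    simp only [Function.comp, hsin, hcos]
    rw [slope_def_field, hFIoo y hy]
    simp only [hF, if_pos rfl]
    field_simp
  have hUD : UniqueDiffOn ℝ (Set.Ioc (-1:ℝ) 1) := uniqueDiffOn_Ioc (-1) 1
  have hDiff : DifferentiableOn ℝ F (Set.Ioc (-1:ℝ) 1) := by
    intro y hy
    rcases eq_or_lt_of_le hy.2 with h | h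
    · rw [h]; exact hslope.differentiableWithinAt
    · exact ((hderiv y ⟨hy.1, h⟩).differentiableAt).differentiableWithinAt
  -- derivWithin identification
  have hDW1 : derivWithin F (Set.Ioc (-1:ℝ) 1) 1 = 1/3 :=
    hslope.derivWithin (hUD 1 (by norm_num))
  have hDWint : ∀ y ∈ Set.Ioo (-1:ℝ) 1, derivWithin F (Set.Ioc (-1:ℝ) 1) y = G' y := by
    intro y hy
    rw [derivWithin_of_mem_nhds (Ioc_mem_nhds hy.1 hy.2)]
    exact (hderiv y hy).deriv
  -- continuity of derivWithin
  have hContD : ContinuousOn (derivWithin F (Set.Ioc (-1:ℝ) 1)) (Set.Ioc (-1:ℝ) 1) := by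
    intro y hy
    rcases eq_or_lt_of_le hy.2 with h | h
    · subst h
      show Tendsto (derivWithin F (Set.Ioc (-1:ℝ) 1)) (𝓝[Set.Ioc (-1:ℝ) 1] 1)
        (𝓝 (derivWithin F (Set.Ioc (-1:ℝ) 1) 1))
      rw [hDW1]
      have hins : Set.Ioc (-1:ℝ) 1 = insert 1 (Set.Ioo (-1:ℝ) 1) := by
        rw [Set.Ioo_insert_right (by norm_num : (-1:ℝ) < 1)]
      have hfil : 𝓝[Set.Ioc (-1:ℝ) 1] (1:ℝ) = pure 1 ⊔ 𝓝[Set.Ioo (-1:ℝ) 1] 1 := by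
        rw [hins, nhdsWithin_insert]
      rw [hfil, tendsto_sup]
      constructor
      · rw [tendsto_pure_left]
        intro s hs
        rw [hDW1]
        exact mem_of_mem_nhds hs
      · refine limG'.congr' ?_
        filter_upwards [self_mem_nhdsWithin] with x hx
        exact (hDWint x hx).symm
    · have hyo : y ∈ Set.Ioo (-1:ℝ) 1 := ⟨hy.1, h⟩
      have hGc : ContinuousAt G' y := by
        have h1 : (1:ℝ) - y ^ 2 > 0 := by nlinarith [hy.1, h]
        have hs : Real.sqrt (1 - y ^ 2) ≠ 0 := ne_of_gt (Real.sqrt_pos.2 h1)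
        have ha : Real.arccos y ≠ 0 := ne_of_gt (Real.arccos_pos.2 h)
        apply ContinuousAt.div
        · apply ContinuousAt.sub continuousAt_const
          apply ContinuousAt.div
          · exact (continuousAt_id.mul Real.continuous_arccos.continuousAt)
          · exact (Real.continuous_sqrt.continuousAt.comp
              ((continuousAt_const.sub (ContinuousAt.pow continuousAt_id 2))))
          · exact hs
        · exact (Real.continuous_arccos.continuousAt.pow 2)
        · exact pow_ne_zero 2 ha
      refine (hGc.continuousWithinAt).congr_of_eventuallyEq ?_ (hDWint y hyo)
      filter_upwards [nhdsWithin_le_nhds (IsOpen.mem_nhds isOpen_Ioo hyo)] with x hx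
      exact hDWint x hx
  refine ⟨F, ?_, ?_, ?_⟩
  · rw [show (1 : WithTop ℕ∞) = 0 + 1 by norm_num, contDiffOn_succ_iff_derivWithin hUD]
    refine ⟨hDiff, by simp, ?_⟩
    rw [contDiffOn_zero]
    exact hContD
  · intro y hy; rw [hFIoo y hy, hf y hy]
  · simp [hF]
end
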